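/- For every N ≥ 1, every K ∈ ℕ, and every pair of starting positions p₁, p₂ ∈ {0,1}^N, the total variation distance between the K-step distributions of the lazy hypercube walk satisfies TV(μ_K(p₁), μ_K(p₂)) ≤ N · ((N−1)/(N+1))^K. -/

import Mathlib

open scoped ENNReal

/-- Total variation distance between two distributions: `(1/2) Σ_x |μ(x) − ν(x)|`. -/
noncomputable def tvDist {X : Type*} (μ ν : PMF X) : ℝ≥0∞ :=
  (1 / 2) * ∑' x, max (μ x - ν x) (ν x - μ x)

/-- One step of the lazy hypercube walk on `{0,1}^N`: sample `i` uniformly from `{0,…,N}`;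
if `i = 0` stay put, otherwise flip coordinate `i`. -/
noncomputable def hcStep (N : ℕ) (p : Fin N → Bool) : PMF (Fin N → Bool) :=
  (PMF.uniformOfFintype (Fin (N + 1))).bind fun i =>
    PMF.pure fun j => if (j : ℕ) + 1 = (i : ℕ) then !(p j) else p j

/-- Distribution of the position of the lazy hypercube walk after `K` steps from `p`. -/
noncomputable def hcWalk (N : ℕ) (p : Fin N → Bool) : ℕ → PMF (Fin N → Bool)
  | 0 => PMF.pure p
  | (K + 1) => (hcWalk N p K).bind (hcStep N)

/-- flip action of the step index on positions -/
def hcF (N : ℕ) (i : Fin (N + 1)) (p : Fin N → Bool) : Fin N → Bool :=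
  fun j => if (j : ℕ) + 1 = (i : ℕ) then !(p j) else p j

/-- flip a single coordinate -/
def flipc {N : ℕ} (j : Fin N) (p : Fin N → Bool) : Fin N → Bool :=
  fun k => if k = j then !(p k) else p k

/-- unnormalized TV -/
noncomputable def Dd {X : Type*} (μ ν : PMF X) : ℝ≥0∞ :=
  ∑' x, max (μ x - ν x) (ν x - μ x)

lemma hcStep_eq (N : ℕ) (p : Fin N → Bool) :
    hcStep N p = (PMF.uniformOfFintype (Fin (N + 1))).bind fun i => PMF.pure (hcF N i p) := rfl

lemma hcF_zero (N : ℕ) (p : Fin N → Bool) : hcF N 0 p = p := by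
  funext k; simp [hcF]

lemma hcF_succ {N : ℕ} (j : Fin N) (p : Fin N → Bool) : hcF N j.succ p = flipc j p := by
  funext k
  simp only [hcF, flipc, Fin.val_succ]
  by_cases h : k = j
  · subst h; simp
  · have : (k : ℕ) + 1 ≠ (j : ℕ) + 1 := by
      simp [Fin.val_eq_val, h]
    simp [this, h, Fin.val_inj]

lemma hcF_flipc {N : ℕ} (i : Fin (N + 1)) (j : Fin N) (p : Fin N → Bool)
    (h : i ≠ j.succ) : hcF N i (flipc j p) = flipc j (hcF N i p) := by
  funext k
  simp only [hcF, flipc]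
  by_cases hk : k = j
  · subst hk
    have : (k : ℕ) + 1 ≠ (i : ℕ) := by
      intro hc
      apply h
      apply Fin.ext
      simp [Fin.val_succ, ← hc]
    simp [this]
  · simp [hk]

lemma walk_step_comm (N : ℕ) (K : ℕ) (p : Fin N → Bool) :
    hcWalk N p (K + 1) = (hcStep N p).bind fun q => hcWalk N q K := by
  induction K generalizing p with
  | zero => simp [hcWalk, PMF.pure_bind, PMF.bind_pure]
  | succ K ih =>
    show (hcWalk N p (K + 1)).bind (hcStep N) = _
    rw [ih, PMF.bind_bind]
    rfl

lemma walk_succ_apply (N K : ℕ) (p : Fin N → Bool) (x : Fin N → Bool) :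
    hcWalk N p (K + 1) x
      = ∑ i : Fin (N + 1), ((N : ℝ≥0∞) + 1)⁻¹ * hcWalk N (hcF N i p) K x := by
  rw [walk_step_comm, hcStep_eq, PMF.bind_bind]
  simp only [PMF.pure_bind]
  rw [PMF.bind_apply, tsum_fintype]
  congr 1
  funext i
  congr 1
  simp [PMF.uniformOfFintype_apply]

lemma Dfun_le_add {X : Type*} (μ ν : PMF X) (x : X) :
    max (μ x - ν x) (ν x - μ x) ≤ μ x + ν x :=
  max_le (le_trans (tsub_le_self) (le_add_right le_rfl))
    (le_trans (tsub_le_self) (le_add_left le_rfl))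

lemma Dd_le_two {X : Type*} (μ ν : PMF X) : Dd μ ν ≤ 2 := by
  calc Dd μ ν ≤ ∑' x, (μ x + ν x) := ENNReal.tsum_le_tsum (Dfun_le_add μ ν)
    _ = (∑' x, μ x) + ∑' x, ν x := ENNReal.tsum_add
    _ = 2 := by rw [μ.tsum_coe, ν.tsum_coe]; norm_num

/-- Key contraction lemma: adjacent starting points. -/
lemma Dd_adjacent (N K : ℕ) (j : Fin N) (p : Fin N → Bool) :
    Dd (hcWalk N p K) (hcWalk N (flipc j p) K)
      ≤ 2 * (((N : ℝ≥0∞) - 1) / ((N : ℝ≥0∞) + 1)) ^ K := by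
  induction K generalizing p with
  | zero =>
    simpa using Dd_le_two (hcWalk N p 0) (hcWalk N (flipc j p) 0)
  | succ K ih =>
    set lam : ℝ≥0∞ := ((N : ℝ≥0∞) - 1) / ((N : ℝ≥0∞) + 1) with hlam
    set c : ℝ≥0∞ := ((N : ℝ≥0∞) + 1)⁻¹ with hc
    set s : Finset (Fin (N + 1)) := (Finset.univ \ {0, j.succ}) with hs
    -- pointwise bound
    have key : ∀ x : Fin N → Bool,
        max (hcWalk N p (K+1) x - hcWalk N (flipc j p) (K+1) x)
            (hcWalk N (flipc j p) (K+1) x - hcWalk N p (K+1) x)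
        ≤ ∑ i ∈ s, c * max (hcWalk N (hcF N i p) K x - hcWalk N (hcF N i (flipc j p)) K x)
            (hcWalk N (hcF N i (flipc j p)) K x - hcWalk N (hcF N i p) K x) := by
      intro x
      rw [walk_succ_apply, walk_succ_apply]
      set a : Fin (N+1) → ℝ≥0∞ := fun i => c * hcWalk N (hcF N i p) K x with ha
      set b : Fin (N+1) → ℝ≥0∞ := fun i => c * hcWalk N (hcF N i (flipc j p)) K x with hb
      have hsplit : ∀ f : Fin (N+1) → ℝ≥0∞,
          ∑ i : Fin (N+1), f i = f 0 + f j.succ + ∑ i ∈ s, f i := by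
        intro f
        have h0s : (0 : Fin (N+1)) ≠ j.succ := (Fin.succ_ne_zero j).symm
        rw [hs, ← Finset.sum_sdiff (Finset.subset_univ {0, j.succ})]
        rw [Finset.sum_pair h0s]
        ring
      have hab0 : a 0 + a j.succ = b 0 + b j.succ := by
        simp only [ha, hb, hcF_zero, hcF_succ]
        have : flipc j (flipc j p) = p := by
          funext k; simp [flipc]; by_cases h : k = j <;> simp [h]
        rw [this]; ring
      have hcomp : ∀ i ∈ s, b i = c * hcWalk N (flipc j (hcF N i p)) K x := by
        intro i hi
        have hi' : i ≠ j.succ := by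
          rw [hs] at hi; simp at hi; tauto
        rw [hb]
        simp only
        rw [hcF_flipc i j p hi']
      -- bound A - B
      have habs : ∀ (u v : Fin (N+1) → ℝ≥0∞), u 0 + u j.succ = v 0 + v j.succ →
          (∑ i : Fin (N+1), u i) - (∑ i : Fin (N+1), v i)
            ≤ ∑ i ∈ s, max (u i - v i) (v i - u i) := by
        intro u v huv
        rw [tsub_le_iff_right, hsplit u, hsplit v, huv]
        have : ∑ i ∈ s, u i ≤ ∑ i ∈ s, (max (u i - v i) (v i - u i) + v i) :=
          Finset.sum_le_sum fun i _ =>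
            le_trans le_tsub_add (add_le_add_left (le_max_left _ _) _)
        rw [Finset.sum_add_distrib] at this
        calc v 0 + v j.succ + ∑ i ∈ s, u i
            ≤ v 0 + v j.succ + (∑ i ∈ s, max (u i - v i) (v i - u i) + ∑ i ∈ s, v i) := by
              exact add_le_add_right this _
          _ = ∑ i ∈ s, max (u i - v i) (v i - u i) + (v 0 + v j.succ + ∑ i ∈ s, v i) := by ring
      have h1 := habs a b hab0
      have h2 := habs b a hab0.symm
      have hmax : ∀ i, max (a i - b i) (b i - a i)
          = c * max (hcWalk N (hcF N i p) K x - hcWalk N (hcF N i (flipc j p)) K x)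
              (hcWalk N (hcF N i (flipc j p)) K x - hcWalk N (hcF N i p) K x) := by
        intro i
        have hcfin : c ≠ ⊤ := by
          rw [hc]; exact ENNReal.inv_ne_top.mpr (by simp)
        rw [ha, hb]
        simp only
        rw [← ENNReal.mul_sub (fun _ _ => hcfin), ← ENNReal.mul_sub (fun _ _ => hcfin),
          mul_max]
      refine max_le (le_trans h1 ?_) (le_trans h2 ?_)
      · exact Finset.sum_le_sum fun i _ => le_of_eq (hmax i)
      · exact Finset.sum_le_sum fun i _ => le_of_eq (by rw [max_comm (b i - a i), hmax i])
    -- sum over x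
    have hDle : Dd (hcWalk N p (K+1)) (hcWalk N (flipc j p) (K+1))
        ≤ ∑ i ∈ s, c * Dd (hcWalk N (hcF N i p) K) (hcWalk N (hcF N i (flipc j p)) K) := by
      calc Dd (hcWalk N p (K+1)) (hcWalk N (flipc j p) (K+1))
          ≤ ∑' x, ∑ i ∈ s, c * max (hcWalk N (hcF N i p) K x - hcWalk N (hcF N i (flipc j p)) K x)
              (hcWalk N (hcF N i (flipc j p)) K x - hcWalk N (hcF N i p) K x) :=
            ENNReal.tsum_le_tsum key
        _ = ∑ i ∈ s, ∑' x, c * max (hcWalk N (hcF N i p) K x - hcWalk N (hcF N i (flipc j p)) K x)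
              (hcWalk N (hcF N i (flipc j p)) K x - hcWalk N (hcF N i p) K x) :=
            Summable.tsum_finsetSum fun i _ => ENNReal.summable
        _ = ∑ i ∈ s, c * Dd (hcWalk N (hcF N i p) K) (hcWalk N (hcF N i (flipc j p)) K) := by
            refine Finset.sum_congr rfl fun i _ => ?_
            rw [Dd, ENNReal.tsum_mul_left]
    -- apply IH on each term
    have hterm : ∀ i ∈ s, Dd (hcWalk N (hcF N i p) K) (hcWalk N (hcF N i (flipc j p)) K)
        ≤ 2 * lam ^ K := by
      intro i hi
      have hi' : i ≠ j.succ := by rw [hs] at hi; simp at hi; tauto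
      rw [hcF_flipc i j p hi']
      exact ih (hcF N i p)
    have hcard : (s.card : ℝ≥0∞) = (N : ℝ≥0∞) - 1 := by
      have h0s : (0 : Fin (N+1)) ≠ j.succ := (Fin.succ_ne_zero j).symm
      have : s.card = N - 1 := by
        rw [hs, Finset.card_sdiff_of_subset (Finset.subset_univ _), Finset.card_pair h0s]
        simp
      rw [this, ENNReal.natCast_sub]
      norm_num
    calc Dd (hcWalk N p (K+1)) (hcWalk N (flipc j p) (K+1))
        ≤ ∑ i ∈ s, c * (2 * lam ^ K) :=
          le_trans hDle (Finset.sum_le_sum fun i hi =>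
            mul_le_mul_right (hterm i hi) c)
      _ = (s.card : ℝ≥0∞) * (c * (2 * lam ^ K)) := by
          rw [Finset.sum_const, nsmul_eq_mul]
      _ = 2 * lam ^ (K + 1) := by
          rw [hcard, pow_succ, hlam, hc, ENNReal.div_eq_inv_mul]
          ring

lemma Dd_triangle {X : Type*} (μ ν ρ : PMF X) : Dd μ ρ ≤ Dd μ ν + Dd ν ρ := by
  have key : ∀ x, max (μ x - ρ x) (ρ x - μ x)
      ≤ max (μ x - ν x) (ν x - μ x) + max (ν x - ρ x) (ρ x - ν x) := by
    intro x
    have h1 : μ x - ρ x ≤ (μ x - ν x) + (ν x - ρ x) := by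
      rw [tsub_le_iff_right, add_assoc]
      exact le_trans le_tsub_add (add_le_add_right le_tsub_add _)
    have h2 : ρ x - μ x ≤ (ν x - μ x) + (ρ x - ν x) := by
      rw [tsub_le_iff_right, add_comm (ν x - μ x), add_assoc]
      exact le_trans le_tsub_add (add_le_add_right le_tsub_add _)
    exact max_le (le_trans h1 (add_le_add (le_max_left _ _) (le_max_left _ _)))
      (le_trans h2 (add_le_add (le_max_right _ _) (le_max_right _ _)))
  calc Dd μ ρ ≤ ∑' x, (max (μ x - ν x) (ν x - μ x) + max (ν x - ρ x) (ρ x - ν x)) :=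
        ENNReal.tsum_le_tsum key
    _ = Dd μ ν + Dd ν ρ := ENNReal.tsum_add

lemma Dd_self {X : Type*} (μ : PMF X) : Dd μ μ = 0 := by
  simp [Dd]

theorem hcWalk_tv_le' (N K : ℕ) (p₁ p₂ : Fin N → Bool) :
    Dd (hcWalk N p₁ K) (hcWalk N p₂ K)
      ≤ (N : ℝ≥0∞) * (2 * (((N : ℝ≥0∞) - 1) / ((N : ℝ≥0∞) + 1)) ^ K) := by
  set lam : ℝ≥0∞ := ((N : ℝ≥0∞) - 1) / ((N : ℝ≥0∞) + 1) with hlam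
  set q : ℕ → (Fin N → Bool) := fun m k => if (k : ℕ) < m then p₂ k else p₁ k with hq
  have hq0 : q 0 = p₁ := by funext k; simp [hq]
  have hqN : q N = p₂ := by funext k; simp [hq, k.isLt]
  have hstep : ∀ m, m < N →
      Dd (hcWalk N (q m) K) (hcWalk N (q (m + 1)) K) ≤ 2 * lam ^ K := by
    intro m hm
    by_cases h : p₁ ⟨m, hm⟩ = p₂ ⟨m, hm⟩
    · have : q (m + 1) = q m := by
        funext k
        simp only [hq]
        by_cases hk : (k : ℕ) < m
        · simp [hk, Nat.lt_succ_of_lt hk]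
        · by_cases hk' : (k : ℕ) < m + 1
          · have hkm : (k : ℕ) = m := by omega
            have : k = ⟨m, hm⟩ := Fin.ext hkm
            simp [hk, hk', this, h]
          · simp [hk, hk']
      rw [this, Dd_self]
      exact zero_le
    · have : q (m + 1) = flipc ⟨m, hm⟩ (q m) := by
        funext k
        simp only [hq, flipc]
        by_cases hk : k = (⟨m, hm⟩ : Fin N)
        · have hkm : (k : ℕ) = m := by rw [hk]
          simp only [hk, if_pos rfl]
          have : ¬ (m : ℕ) < m := lt_irrefl m
          simp only [hkm, Nat.lt_succ_iff, le_refl, if_pos, this, if_neg]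
          cases hb1 : p₁ ⟨m, hm⟩ <;> cases hb2 : p₂ ⟨m, hm⟩ <;>
            simp_all
        · have hkm : (k : ℕ) ≠ m := fun hc => hk (Fin.ext hc)
          have : ((k : ℕ) < m + 1) ↔ ((k : ℕ) < m) := by omega
          simp [hk, this]
      rw [this]
      exact Dd_adjacent N K ⟨m, hm⟩ (q m)
  have hmain : ∀ m, m ≤ N →
      Dd (hcWalk N (q 0) K) (hcWalk N (q m) K) ≤ (m : ℝ≥0∞) * (2 * lam ^ K) := by
    intro m hm
    induction m with
    | zero => simp [Dd_self]
    | succ m ih =>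
      calc Dd (hcWalk N (q 0) K) (hcWalk N (q (m+1)) K)
          ≤ Dd (hcWalk N (q 0) K) (hcWalk N (q m) K)
            + Dd (hcWalk N (q m) K) (hcWalk N (q (m+1)) K) := Dd_triangle _ _ _
        _ ≤ (m : ℝ≥0∞) * (2 * lam ^ K) + 2 * lam ^ K :=
            add_le_add (ih (Nat.le_of_succ_le hm)) (hstep m (Nat.lt_of_succ_le hm))
        _ = ((m + 1 : ℕ) : ℝ≥0∞) * (2 * lam ^ K) := by push_cast; ring
  have := hmain N le_rfl
  rwa [hq0, hqN] at this

/-- **Rapid mixing of the lazy hypercube walk (upper bound).** For any `N ≥ 1`, `K`, and starting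
positions `p₁, p₂`, the TV distance between the `K`-step distributions is at most
`N · ((N−1)/(N+1))^K`. -/
theorem hcWalk_tv_le (N K : ℕ) (hN : 1 ≤ N) (p₁ p₂ : Fin N → Bool) :
    tvDist (hcWalk N p₁ K) (hcWalk N p₂ K)
      ≤ (N : ℝ≥0∞) * (((N : ℝ≥0∞) - 1) / ((N : ℝ≥0∞) + 1)) ^ K := by
  have h := hcWalk_tv_le' N K p₁ p₂
  rw [tvDist]
  show (1 / 2 : ℝ≥0∞) * Dd (hcWalk N p₁ K) (hcWalk N p₂ K) ≤ _
  calc (1 / 2 : ℝ≥0∞) * Dd (hcWalk N p₁ K) (hcWalk N p₂ K)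
      ≤ (1 / 2 : ℝ≥0∞) * ((N : ℝ≥0∞) * (2 * (((N : ℝ≥0∞) - 1) / ((N : ℝ≥0∞) + 1)) ^ K)) :=
        mul_le_mul_right h _
    _ = ((1 / 2 : ℝ≥0∞) * 2) * ((N : ℝ≥0∞) * (((N : ℝ≥0∞) - 1) / ((N : ℝ≥0∞) + 1)) ^ K) := by
        ring
    _ = (N : ℝ≥0∞) * (((N : ℝ≥0∞) - 1) / ((N : ℝ≥0∞) + 1)) ^ K := by
        rw [one_div, ENNReal.inv_mul_cancel (by norm_num) (by norm_num), one_mul]
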